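/- Let ℓ_i(δ) = m_i·δ + c_i, i ∈ [n], be an arrangement of n distinct lines with rational slopes m_i ∈ (1,2) and c_i/m_i ∈ ℕ₀ for every i, and let k ∈ {0,…,n−1} be such that every line ℓ_i intersects the k-level Λ_k at some δ ∈ [0,1], and Λ_k has z vertices lying in (0,1). Let N be a positive integer such that N/m_i is a positive integer for every i, and set p_i = N/m_i and H = (∑_{i=1}^n c_i/m_i) + k + 1. Then the apportionment instance (p,H) has at least ⌈z/2⌉ breaking points, or the apportionment instance (p,H−1) has at least ⌈z/2⌉ breaking points. -/

import Mathlib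

open scoped Classical
open Set

noncomputable section

/-- The stationary rounding rule `⟦r⟧_δ ⊆ ℕ`. -/
def roundSet (δ r : ℝ) : Set ℕ :=
  {x | (r < δ ∧ x = 0) ∨
       (∃ t : ℕ, x = t ∧ (t : ℝ) - 1 + δ < r ∧ r < (t : ℝ) + δ) ∨
       (∃ t : ℕ, (x = t ∨ x = t + 1) ∧ r = (t : ℝ) + δ)}

/-- The output set `f(p,H;δ)` of the stationary `δ`-divisor method. -/
def divisorOutput {n : ℕ} (p : Fin n → ℕ) (H : ℕ) (δ : ℝ) : Set (Fin n → ℕ) :=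
  {x | (∑ i, x i) = H ∧ ∃ lam : ℝ, 0 < lam ∧ ∀ i, x i ∈ roundSet δ (lam * (p i : ℝ))}

/-- The quota `q_i = p_i · H / P` of state `i`. -/
def quota {n : ℕ} (p : Fin n → ℕ) (H : ℕ) (i : Fin n) : ℝ :=
  (p i : ℝ) * (H : ℝ) / (∑ j, (p j : ℝ))

/-- `τ ∈ [0,1]` is a breaking point of the instance `(p,H)`. -/
def IsBreakingPoint {n : ℕ} (p : Fin n → ℕ) (H : ℕ) (τ : ℝ) : Prop :=
  (τ = 0 ∨ τ = 1) ∨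
    (0 < τ ∧ τ < 1 ∧ ∀ ε : ℝ, 0 < ε →
      ∃ δ₁ δ₂ : ℝ,
        δ₁ ∈ (Set.Ioo (τ - ε) (τ + ε) ∩ Set.Ioo (0 : ℝ) 1) \ {τ} ∧
        δ₂ ∈ (Set.Ioo (τ - ε) (τ + ε) ∩ Set.Ioo (0 : ℝ) 1) \ {τ} ∧
        divisorOutput p H δ₁ ≠ divisorOutput p H δ₂)

/-- The `k`-level of the arrangement of the `m` affine functions `δ ↦ a i * δ + b i`:
the `(k+1)`-st smallest of the values at `δ`. -/
def levelFun {m : ℕ} (a b : Fin m → ℝ) (k : ℕ) (δ : ℝ) : ℝ :=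
  sInf {y : ℝ | k + 1 ≤ (Finset.univ.filter (fun i : Fin m => a i * δ + b i ≤ y)).card}

/-- A vertex of the `k`-level: a point where the level does not coincide with a single
affine function on any open neighborhood. -/
def IsVertex {m : ℕ} (a b : Fin m → ℝ) (k : ℕ) (δ : ℝ) : Prop :=
  ¬ ∃ (α β ε : ℝ), 0 < ε ∧ ∀ x ∈ Set.Ioo (δ - ε) (δ + ε), levelFun a b k x = α * x + β

/-! ### Auxiliary lemmas -/

def kLevel {n : ℕ} (w : Fin n → ℝ) (k : ℕ) : ℝ :=
  sInf {y : ℝ | k + 1 ≤ (Finset.univ.filter (fun i : Fin n => w i ≤ y)).card}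

namespace kLevelAux

variable {n : ℕ}

def S (w : Fin n → ℝ) (k : ℕ) : Set ℝ :=
  {y : ℝ | k + 1 ≤ (Finset.univ.filter (fun i : Fin n => w i ≤ y)).card}

lemma univ_ne {k : ℕ} (hk : k < n) : (Finset.univ : Finset (Fin n)).Nonempty := by
  rw [Finset.univ_nonempty_iff]
  exact Fin.pos_iff_nonempty.mp (Nat.lt_of_le_of_lt (Nat.zero_le k) hk)

lemma S_nonempty (w : Fin n → ℝ) (k : ℕ) (hk : k < n) : (S w k).Nonempty := by
  refine ⟨Finset.univ.sup' (univ_ne hk) w, ?_⟩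
  have : (Finset.univ.filter (fun i : Fin n => w i ≤ Finset.univ.sup' (univ_ne hk) w)) = Finset.univ := by
    apply Finset.filter_true_of_mem
    intro i _
    exact Finset.le_sup' w (Finset.mem_univ i)
  simp only [S, Set.mem_setOf_eq, this, Finset.card_univ, Fintype.card_fin]
  omega

lemma S_bddBelow (w : Fin n → ℝ) (k : ℕ) (hk : k < n) : BddBelow (S w k) := by
  refine ⟨Finset.univ.inf' (univ_ne hk) w, ?_⟩
  intro y hy
  have hpos : 0 < (Finset.univ.filter (fun i : Fin n => w i ≤ y)).card := by
    have := hy; simp only [S, Set.mem_setOf_eq] at this; omega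
  obtain ⟨i, hi⟩ := Finset.card_pos.mp hpos
  have hwi : w i ≤ y := (Finset.mem_filter.mp hi).2
  exact le_trans (Finset.inf'_le w (Finset.mem_univ i)) hwi

lemma kLevel_mem (w : Fin n → ℝ) (k : ℕ) (hk : k < n) :
    k + 1 ≤ (Finset.univ.filter (fun i : Fin n => w i ≤ kLevel w k)).card := by
  by_contra hcon
  push_neg at hcon
  have hTne : (Finset.univ.filter (fun i : Fin n => kLevel w k < w i)).Nonempty := by
    by_contra hT
    rw [Finset.not_nonempty_iff_eq_empty, Finset.filter_eq_empty_iff] at hT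
    have : (Finset.univ.filter (fun i : Fin n => w i ≤ kLevel w k)) = Finset.univ := by
      apply Finset.filter_true_of_mem
      intro i hi
      have := hT hi
      push_neg at this
      exact this
    rw [this, Finset.card_univ, Fintype.card_fin] at hcon
    omega
  set T := Finset.univ.filter (fun i : Fin n => kLevel w k < w i) with hTdef
  have hu : kLevel w k < T.inf' hTne w := by
    rw [Finset.lt_inf'_iff]
    intro i hi
    exact (Finset.mem_filter.mp hi).2
  have hlow : ∀ y ∈ S w k, T.inf' hTne w ≤ y := by
    intro y hy
    by_contra hcon2
    push_neg at hcon2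
    have hLy : kLevel w k ≤ y := csInf_le (S_bddBelow w k hk) hy
    have hsub : (Finset.univ.filter (fun i : Fin n => w i ≤ y)) ⊆
        (Finset.univ.filter (fun i : Fin n => w i ≤ kLevel w k)) := by
      intro i hi
      have hwiy : w i ≤ y := (Finset.mem_filter.mp hi).2
      by_cases hwi : w i ≤ kLevel w k
      · exact Finset.mem_filter.mpr ⟨Finset.mem_univ i, hwi⟩
      · exfalso
        push_neg at hwi
        have hiT : i ∈ T := Finset.mem_filter.mpr ⟨Finset.mem_univ i, hwi⟩
        have := Finset.inf'_le w hiT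
        linarith
    have := Finset.card_le_card hsub
    have hy' := hy
    simp only [S, Set.mem_setOf_eq] at hy'
    omega
  have : T.inf' hTne w ≤ kLevel w k := le_csInf (S_nonempty w k hk) hlow
  linarith

lemma card_le_of_lt_kLevel (w : Fin n → ℝ) (k : ℕ) (hk : k < n) {y : ℝ} (hy : y < kLevel w k) :
    (Finset.univ.filter (fun i : Fin n => w i ≤ y)).card ≤ k := by
  by_contra hcon
  push_neg at hcon
  have hyS : y ∈ S w k := by simp only [S, Set.mem_setOf_eq]; omega
  have h2 : kLevel w k ≤ y := csInf_le (S_bddBelow w k hk) hyS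
  linarith

lemma kLevel_attained (w : Fin n → ℝ) (k : ℕ) (hk : k < n) : ∃ i, w i = kLevel w k := by
  by_contra hcon
  push_neg at hcon
  have hcard := kLevel_mem w k hk
  have hne : (Finset.univ.filter (fun i : Fin n => w i ≤ kLevel w k)).Nonempty := by
    apply Finset.card_pos.mp; omega
  set F := Finset.univ.filter (fun i : Fin n => w i ≤ kLevel w k) with hF
  have hlt : F.sup' hne w < kLevel w k := by
    rw [Finset.sup'_lt_iff]
    intro i hi
    exact lt_of_le_of_ne (Finset.mem_filter.mp hi).2 (hcon i)
  have hsub : F ⊆ Finset.univ.filter (fun i : Fin n => w i ≤ F.sup' hne w) := by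
    intro i hi
    exact Finset.mem_filter.mpr ⟨Finset.mem_univ i, Finset.le_sup' w hi⟩
  have := Finset.card_le_card hsub
  have := card_le_of_lt_kLevel w k hk hlt
  omega

lemma card_lt_kLevel_le (w : Fin n → ℝ) (k : ℕ) (hk : k < n) :
    (Finset.univ.filter (fun i : Fin n => w i < kLevel w k)).card ≤ k := by
  rcases Finset.eq_empty_or_nonempty (Finset.univ.filter (fun i : Fin n => w i < kLevel w k)) with h | h
  · rw [h]; simp
  · set F := Finset.univ.filter (fun i : Fin n => w i < kLevel w k) with hF
    have hlt : F.sup' h w < kLevel w k := by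
      rw [Finset.sup'_lt_iff]
      intro i hi
      exact (Finset.mem_filter.mp hi).2
    have hsub : F ⊆ Finset.univ.filter (fun i : Fin n => w i ≤ F.sup' h w) := by
      intro i hi
      exact Finset.mem_filter.mpr ⟨Finset.mem_univ i, Finset.le_sup' w hi⟩
    have h1 := Finset.card_le_card hsub
    have h2 := card_le_of_lt_kLevel w k hk hlt
    omega

lemma card_eq_of_inj (w : Fin n → ℝ) (k : ℕ) (hk : k < n)
    (hinj : ∀ i j, w i = w j → i = j) :
    (Finset.univ.filter (fun i : Fin n => w i ≤ kLevel w k)).card = k + 1 ∧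
    (Finset.univ.filter (fun i : Fin n => w i < kLevel w k)).card = k := by
  obtain ⟨i₀, hi₀⟩ := kLevel_attained w k hk
  have hsplit : (Finset.univ.filter (fun i : Fin n => w i ≤ kLevel w k)) =
      (Finset.univ.filter (fun i : Fin n => w i < kLevel w k)) ∪
      (Finset.univ.filter (fun i : Fin n => w i = kLevel w k)) := by
    rw [← Finset.filter_or]
    apply Finset.filter_congr
    intro i _
    simp [le_iff_lt_or_eq]
  have hdisj : Disjoint (Finset.univ.filter (fun i : Fin n => w i < kLevel w k))
      (Finset.univ.filter (fun i : Fin n => w i = kLevel w k)) := by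
    rw [Finset.disjoint_filter]
    intro i _ h1 h2
    exact absurd h2 (ne_of_lt h1)
  have heq1 : (Finset.univ.filter (fun i : Fin n => w i = kLevel w k)).card = 1 := by
    have : (Finset.univ.filter (fun i : Fin n => w i = kLevel w k)) = {i₀} := by
      apply Finset.eq_singleton_iff_unique_mem.mpr
      constructor
      · exact Finset.mem_filter.mpr ⟨Finset.mem_univ i₀, hi₀⟩
      · intro j hj
        exact hinj j i₀ (by rw [(Finset.mem_filter.mp hj).2, hi₀])
    rw [this, Finset.card_singleton]
  have hcard : (Finset.univ.filter (fun i : Fin n => w i ≤ kLevel w k)).card =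
      (Finset.univ.filter (fun i : Fin n => w i < kLevel w k)).card + 1 := by
    rw [hsplit, Finset.card_union_of_disjoint hdisj, heq1]
  have h1 := kLevel_mem w k hk
  have h2 := card_lt_kLevel_le w k hk
  omega

lemma kLevel_shift {k : ℕ} (hk : k < n) (w w' : Fin n → ℝ) (A B : ℝ)
    (h1 : ∀ i, A ≤ w' i - w i) (h2 : ∀ i, w' i - w i ≤ B) :
    kLevel w k + A ≤ kLevel w' k ∧ kLevel w' k ≤ kLevel w k + B := by
  constructor
  · have hmem := kLevel_mem w' k hk
    have hsub : (Finset.univ.filter (fun i : Fin n => w' i ≤ kLevel w' k)) ⊆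
        (Finset.univ.filter (fun i : Fin n => w i ≤ kLevel w' k - A)) := by
      intro i hi
      have := (Finset.mem_filter.mp hi).2
      have := h1 i
      exact Finset.mem_filter.mpr ⟨Finset.mem_univ i, by linarith⟩
    have hS : (kLevel w' k - A) ∈ S w k := by
      simp only [S, Set.mem_setOf_eq]
      exact le_trans hmem (Finset.card_le_card hsub)
    have hL : kLevel w k ≤ kLevel w' k - A := csInf_le (S_bddBelow w k hk) hS
    linarith
  · have hmem := kLevel_mem w k hk
    have hsub : (Finset.univ.filter (fun i : Fin n => w i ≤ kLevel w k)) ⊆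
        (Finset.univ.filter (fun i : Fin n => w' i ≤ kLevel w k + B)) := by
      intro i hi
      have := (Finset.mem_filter.mp hi).2
      have := h2 i
      exact Finset.mem_filter.mpr ⟨Finset.mem_univ i, by linarith⟩
    have hS : (kLevel w k + B) ∈ S w' k := by
      simp only [S, Set.mem_setOf_eq]
      exact le_trans hmem (Finset.card_le_card hsub)
    exact csInf_le (S_bddBelow w' k hk) hS

end kLevelAux

lemma mem_roundSet_iff {δ r : ℝ} (hδ0 : 0 < δ) (hδ1 : δ < 1) (hr : 0 < r) (x : ℕ) :
    x ∈ roundSet δ r ↔ ((x : ℝ) - 1 + δ ≤ r ∧ r ≤ (x : ℝ) + δ) := by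
  constructor
  · rintro (⟨h1, h2⟩ | ⟨t, rfl, h1, h2⟩ | ⟨t, (rfl | rfl), h⟩)
    · subst h2; simp; constructor <;> linarith
    · constructor <;> linarith
    · constructor <;> [linarith; linarith]
    · push_cast
      constructor <;> [linarith; linarith]
  · rintro ⟨h1, h2⟩
    rcases eq_or_lt_of_le h2 with heq | hlt
    · exact Or.inr (Or.inr ⟨x, Or.inl rfl, heq⟩)
    rcases eq_or_lt_of_le h1 with heq | hlt2
    · have hx : 1 ≤ x := by
        by_contra hx
        push_neg at hx
        interval_cases x
        simp at heq
        linarith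
      refine Or.inr (Or.inr ⟨x - 1, Or.inr ?_, ?_⟩)
      · omega
      · push_cast [hx]
        linarith
    · rcases Nat.eq_zero_or_pos x with rfl | hx
      · exact Or.inl ⟨by simpa using hlt, rfl⟩
      · exact Or.inr (Or.inl ⟨x, rfl, hlt2, hlt⟩)

lemma exists_mem_Ioo_not_mem {a b : ℝ} (hab : a < b) {s : Set ℝ} (hs : s.Finite) :
    ∃ x, x ∈ Set.Ioo a b ∧ x ∉ s := by
  have hinf : (Set.Ioo a b).Infinite := Set.Ioo_infinite hab
  obtain ⟨x, hx⟩ := (hinf.diff hs).nonempty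
  exact ⟨x, hx.1, hx.2⟩

set_option maxHeartbeats 4000000 in
/-- lower-bound construction. From a line arrangement with slopes in `(1,2)`,
`c_i/m_i ∈ ℕ`, whose `k`-level has `z` vertices in `(0,1)`, the derived apportionment
instance `(p,H)` or `(p,H−1)` has at least `⌈z/2⌉` breaking points. -/
theorem stmt_7 {n : ℕ} (hn : 1 ≤ n) (m c : Fin n → ℝ)
    (hdist : ∀ i j : Fin n, i ≠ j → (m i, c i) ≠ (m j, c j))
    (hrat : ∀ i, ∃ q : ℚ, m i = (q : ℝ))
    (hm : ∀ i, m i ∈ Set.Ioo (1 : ℝ) 2)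
    (hcm : ∀ i, ∃ t : ℕ, c i / m i = (t : ℝ))
    (k : ℕ) (hk : k < n)
    (hint : ∀ i, ∃ δ ∈ Set.Icc (0 : ℝ) 1, m i * δ + c i = levelFun m c k δ)
    (z : ℕ)
    (hzfin : {δ : ℝ | δ ∈ Set.Ioo (0 : ℝ) 1 ∧ IsVertex m c k δ}.Finite)
    (hz : {δ : ℝ | δ ∈ Set.Ioo (0 : ℝ) 1 ∧ IsVertex m c k δ}.ncard = z)
    (N : ℕ) (hN : 0 < N) (p : Fin n → ℕ) (hpdef : ∀ i, (p i : ℝ) = (N : ℝ) / m i)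
    (H : ℕ) (hHdef : (H : ℝ) = (∑ i, c i / m i) + (k : ℝ) + 1) :
    (∃ S : Finset ℝ, (∀ τ ∈ S, IsBreakingPoint p H τ) ∧ (z + 1) / 2 ≤ S.card) ∨
    (∃ S : Finset ℝ, (∀ τ ∈ S, IsBreakingPoint p (H - 1) τ) ∧ (z + 1) / 2 ≤ S.card) := by
  -- basic facts about slopes
  have hm1 : ∀ i, 1 < m i := fun i => (hm i).1
  have hm2 : ∀ i, m i < 2 := fun i => (hm i).2
  have hm0 : ∀ i, 0 < m i := fun i => lt_trans one_pos (hm1 i)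
  -- integer intercepts
  choose t ht using hcm
  have hct : ∀ i, c i = m i * t i := by
    intro i
    have h := (div_eq_iff (ne_of_gt (hm0 i))).mp (ht i)
    rw [h]; ring
  -- populations are positive
  have hppos : ∀ i, 0 < (p i : ℝ) := by
    intro i
    rw [hpdef i]
    exact div_pos (by exact_mod_cast hN) (hm0 i)
  -- house size
  have hHnat : H = (∑ i, t i) + k + 1 := by
    have : (H : ℝ) = (((∑ i, t i) + k + 1 : ℕ) : ℝ) := by
      rw [hHdef]
      push_cast
      congr 1
      congr 1
      exact Finset.sum_congr rfl (fun i _ => ht i)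
    exact_mod_cast this
  have hN0 : (0:ℝ) < (N:ℝ) := by exact_mod_cast hN
  -- the level function
  have hΛk : ∀ δ : ℝ, levelFun m c k δ = kLevel (fun i => m i * δ + c i) k := fun _ => rfl
  have hune : (Finset.univ : Finset (Fin n)).Nonempty := kLevelAux.univ_ne hk
  set amin : ℝ := Finset.univ.inf' hune m with hamin
  set bmax : ℝ := Finset.univ.sup' hune m with hbmax
  have hamin1 : 1 < amin := by
    rw [hamin, Finset.lt_inf'_iff]
    intro i _
    exact hm1 i
  have hbmax2 : bmax < 2 := by
    rw [hbmax, Finset.sup'_lt_iff]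
    intro i _
    exact hm2 i
  have haml : ∀ i, amin ≤ m i := fun i => Finset.inf'_le m (Finset.mem_univ i)
  have hmbl : ∀ i, m i ≤ bmax := fun i => Finset.le_sup' m (Finset.mem_univ i)
  have hba : bmax - amin < 1 := by linarith
  have hba0 : 0 ≤ bmax - amin := by
    have i0 : Fin n := ⟨0, Nat.lt_of_le_of_lt (Nat.zero_le k) hk⟩
    linarith [haml i0, hmbl i0]
  -- level shift bounds
  have hshift : ∀ x y : ℝ, x ≤ y →
      amin * (y - x) ≤ levelFun m c k y - levelFun m c k x ∧
      levelFun m c k y - levelFun m c k x ≤ bmax * (y - x) := by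
    intro x y hxy
    obtain ⟨h1, h2⟩ := kLevelAux.kLevel_shift hk (fun i => m i * x + c i) (fun i => m i * y + c i)
      (amin * (y - x)) (bmax * (y - x))
      (fun i => by
        have he : m i * y + c i - (m i * x + c i) = m i * (y - x) := by ring
        rw [he]
        exact mul_le_mul_of_nonneg_right (haml i) (by linarith))
      (fun i => by
        have he : m i * y + c i - (m i * x + c i) = m i * (y - x) := by ring
        rw [he]
        exact mul_le_mul_of_nonneg_right (hmbl i) (by linarith))
    rw [hΛk x, hΛk y]
    constructor <;> linarith
  -- Lipschitz bound
  have hlip : ∀ x y : ℝ, |levelFun m c k x - levelFun m c k y| ≤ 2 * |x - y| := by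
    intro x y
    rcases le_total x y with h | h
    · obtain ⟨h1, h2⟩ := hshift x y h
      have e0 : 0 ≤ amin * (y - x) := mul_nonneg (by linarith) (by linarith)
      have e1 : bmax * (y - x) ≤ 2 * (y - x) :=
        mul_le_mul_of_nonneg_right (by linarith) (by linarith)
      rw [abs_sub_comm, abs_of_nonneg (by linarith), abs_of_nonpos (by linarith)]
      linarith
    · obtain ⟨h1, h2⟩ := hshift y x h
      have e0 : 0 ≤ amin * (x - y) := mul_nonneg (by linarith) (by linarith)
      have e1 : bmax * (x - y) ≤ 2 * (x - y) :=
        mul_le_mul_of_nonneg_right (by linarith) (by linarith)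
      rw [abs_of_nonneg (by linarith), abs_of_nonneg (by linarith)]
      linarith
  -- every line is close to the level on [0,1]
  have hclose : ∀ δ : ℝ, 0 ≤ δ → δ ≤ 1 → ∀ i,
      |m i * δ + c i - levelFun m c k δ| ≤ bmax - amin := by
    intro δ h0 h1 i
    obtain ⟨δs, ⟨hs0, hs1⟩, heq⟩ := hint i
    rw [abs_le]
    rcases le_total δ δs with hord | hord
    · obtain ⟨ha, hb⟩ := hshift δ δs hord
      have hΔ0 : (0:ℝ) ≤ δs - δ := by linarith
      have hΔ1 : δs - δ ≤ 1 := by linarith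
      have e1 : amin * (δs - δ) ≤ m i * (δs - δ) := mul_le_mul_of_nonneg_right (haml i) hΔ0
      have e2 : m i * (δs - δ) ≤ bmax * (δs - δ) := mul_le_mul_of_nonneg_right (hmbl i) hΔ0
      have e3 : (bmax - amin) * (δs - δ) ≤ (bmax - amin) := by
        calc (bmax - amin) * (δs - δ) ≤ (bmax - amin) * 1 :=
              mul_le_mul_of_nonneg_left hΔ1 hba0
          _ = bmax - amin := mul_one _
      have e4 : (bmax - amin) * (δs - δ) = bmax * (δs - δ) - amin * (δs - δ) := by ring
      have hv : m i * δ + c i = levelFun m c k δs - m i * (δs - δ) := by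
        rw [← heq]; ring
      rw [hv]
      constructor <;> linarith
    · obtain ⟨ha, hb⟩ := hshift δs δ hord
      have hΔ0 : (0:ℝ) ≤ δ - δs := by linarith
      have hΔ1 : δ - δs ≤ 1 := by linarith
      have e1 : amin * (δ - δs) ≤ m i * (δ - δs) := mul_le_mul_of_nonneg_right (haml i) hΔ0
      have e2 : m i * (δ - δs) ≤ bmax * (δ - δs) := mul_le_mul_of_nonneg_right (hmbl i) hΔ0
      have e3 : (bmax - amin) * (δ - δs) ≤ (bmax - amin) := by
        calc (bmax - amin) * (δ - δs) ≤ (bmax - amin) * 1 :=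
              mul_le_mul_of_nonneg_left hΔ1 hba0
          _ = bmax - amin := mul_one _
      have e4 : (bmax - amin) * (δ - δs) = bmax * (δ - δs) - amin * (δ - δs) := by ring
      have hv : m i * δ + c i = levelFun m c k δs + m i * (δ - δs) := by
        rw [← heq]; ring
      rw [hv]
      constructor <;> linarith
  have hclose1 : ∀ δ : ℝ, 0 ≤ δ → δ ≤ 1 → ∀ i,
      levelFun m c k δ - 1 < m i * δ + c i ∧ m i * δ + c i < levelFun m c k δ + 1 := by
    intro δ h0 h1 i
    have h := hclose δ h0 h1 i
    rw [abs_le] at h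
    constructor <;> linarith [h.1, h.2]
  -- positivity of the level
  have hΛpos : ∀ δ : ℝ, 0 < δ → 0 < levelFun m c k δ := by
    intro δ hδ
    obtain ⟨i0, hi0⟩ := kLevelAux.kLevel_attained (fun i => m i * δ + c i) k hk
    have hv : levelFun m c k δ = m i0 * δ + c i0 := by rw [hΛk δ, ← hi0]
    rw [hv, hct i0]
    have ht0 : (0:ℝ) ≤ (t i0 : ℝ) := Nat.cast_nonneg _
    nlinarith [hm0 i0]
  -- the finite exceptional set of crossing points
  set E : Set ℝ := {δ | ∃ i j : Fin n, i ≠ j ∧ m i * δ + c i = m j * δ + c j} with hE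
  have hEfin : E.Finite := by
    have hsub : E ⊆ ⋃ (i : Fin n), ⋃ (j : Fin n),
        {δ : ℝ | i ≠ j ∧ m i * δ + c i = m j * δ + c j} := by
      rintro δ ⟨i, j, hij, heq⟩
      exact Set.mem_iUnion.mpr ⟨i, Set.mem_iUnion.mpr ⟨j, hij, heq⟩⟩
    refine Set.Finite.subset ?_ hsub
    refine Set.finite_iUnion (fun i => Set.finite_iUnion (fun j => ?_))
    apply Set.Subsingleton.finite
    rintro a ⟨hij, ha⟩ b ⟨-, hb⟩
    by_cases hmm : m i = m j
    · exfalso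
      have hc : c i = c j := by
        rw [hmm] at ha
        linarith
      exact hdist i j hij (by rw [hmm, hc])
    · have h1 : (m i - m j) * a = c j - c i := by linarith
      have h2 : (m i - m j) * b = c j - c i := by linarith
      have h3 : (m i - m j) * a = (m i - m j) * b := by rw [h1, h2]
      exact mul_left_cancel₀ (sub_ne_zero.mpr hmm) h3
  -- characterization of the divisor output
  have hout : ∀ (Hs : ℕ) (δ : ℝ), 0 < δ → δ < 1 → ∀ x : Fin n → ℕ,
      (x ∈ divisorOutput p Hs δ ↔ (∑ i, x i) = Hs ∧ ∃ μ : ℝ, 0 < μ ∧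
        ∀ i, m i * ((x i : ℝ) - 1 + δ) ≤ μ ∧ μ ≤ m i * ((x i : ℝ) + δ)) := by
    intro Hs δ hδ0 hδ1 x
    constructor
    · rintro ⟨hsum, lam, hlam, hcond⟩
      refine ⟨hsum, lam * N, by positivity, fun i => ?_⟩
      have hpi : lam * (p i : ℝ) = lam * N / m i := by rw [hpdef i]; ring
      have hrpos : 0 < lam * (p i : ℝ) := mul_pos hlam (hppos i)
      have h := (mem_roundSet_iff hδ0 hδ1 hrpos (x i)).mp (hcond i)
      rw [hpi] at h
      constructor
      · have h' := (le_div_iff₀ (hm0 i)).mp h.1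
        linarith [mul_comm (m i) ((x i : ℝ) - 1 + δ)]
      · have h' := (div_le_iff₀ (hm0 i)).mp h.2
        linarith [mul_comm (m i) ((x i : ℝ) + δ)]
    · rintro ⟨hsum, μ, hμ, hcond⟩
      refine ⟨hsum, μ / N, by positivity, fun i => ?_⟩
      have hpi : μ / N * (p i : ℝ) = μ / m i := by
        rw [hpdef i]
        field_simp
      have hrpos : 0 < μ / N * (p i : ℝ) := by
        rw [hpi]
        exact div_pos hμ (hm0 i)
      rw [mem_roundSet_iff hδ0 hδ1 hrpos (x i), hpi]
      obtain ⟨ha, hb⟩ := hcond i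
      constructor
      · rw [le_div_iff₀ (hm0 i)]
        linarith [mul_comm (m i) ((x i : ℝ) - 1 + δ)]
      · rw [div_le_iff₀ (hm0 i)]
        linarith [mul_comm (m i) ((x i : ℝ) + δ)]
  -- the sets of lines weakly/strictly below the level
  set B : ℝ → Finset (Fin n) :=
    fun δ => Finset.univ.filter (fun j => m j * δ + c j ≤ levelFun m c k δ) with hBdef
  set B' : ℝ → Finset (Fin n) :=
    fun δ => Finset.univ.filter (fun j => m j * δ + c j < levelFun m c k δ) with hB'def
  have hBmem : ∀ δ j, j ∈ B δ ↔ m j * δ + c j ≤ levelFun m c k δ := by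
    intro δ j
    rw [hBdef]
    simp
  have hB'mem : ∀ δ j, j ∈ B' δ ↔ m j * δ + c j < levelFun m c k δ := by
    intro δ j
    rw [hB'def]
    simp
  have hB'sub : ∀ δ, B' δ ⊆ B δ := by
    intro δ j hj
    exact (hBmem δ j).mpr (le_of_lt ((hB'mem δ j).mp hj))
  have hBcard_ge : ∀ δ : ℝ, k + 1 ≤ (B δ).card := by
    intro δ
    exact kLevelAux.kLevel_mem (fun i => m i * δ + c i) k hk
  have hB'card_le : ∀ δ : ℝ, (B' δ).card ≤ k := by
    intro δ
    exact kLevelAux.card_lt_kLevel_le (fun i => m i * δ + c i) k hk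
  have hgenCards : ∀ δ : ℝ, δ ∉ E → (B δ).card = k + 1 ∧ (B' δ).card = k := by
    intro δ hδE
    refine kLevelAux.card_eq_of_inj (fun i => m i * δ + c i) k hk ?_
    intro i j hij
    by_contra hne
    exact hδE ⟨i, j, hne, hij⟩
  -- membership of the canonical allocations
  have hcanon1 : ∀ δ : ℝ, 0 < δ → δ < 1 →
      (B δ).card = k + 1 →
      (fun j => t j + if j ∈ B δ then 1 else 0) ∈ divisorOutput p H δ := by
    intro δ hδ0 hδ1 hcard
    rw [hout H δ hδ0 hδ1]
    constructor
    · have hsum1 : ∑ j, (if j ∈ B δ then (1:ℕ) else 0) = (B δ).card := by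
        rw [Finset.sum_ite_mem, Finset.univ_inter, Finset.card_eq_sum_ones]
      rw [Finset.sum_add_distrib, hsum1, hcard, hHnat]
      omega
    · refine ⟨levelFun m c k δ, hΛpos δ hδ0, fun i => ?_⟩
      have hcl := hclose1 δ (le_of_lt hδ0) (le_of_lt hδ1) i
      by_cases hiB : i ∈ B δ
      · have hmem := (hBmem δ i).mp hiB
        simp only [hiB, if_true]
        push_cast
        have he1 : m i * ((t i : ℝ) + 1 - 1 + δ) = m i * δ + c i := by
          rw [hct i]; ring
        have he2 : m i * ((t i : ℝ) + 1 + δ) = m i * δ + c i + m i := by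
          rw [hct i]; ring
        rw [he1, he2]
        constructor
        · exact hmem
        · linarith [hm1 i, hcl.2]
      · have hmem : levelFun m c k δ < m i * δ + c i := by
          by_contra hno
          push_neg at hno
          exact hiB ((hBmem δ i).mpr hno)
        simp only [hiB, if_false]
        push_cast
        have he1 : m i * ((t i : ℝ) + 0 - 1 + δ) = m i * δ + c i - m i := by
          rw [hct i]; ring
        have he2 : m i * ((t i : ℝ) + 0 + δ) = m i * δ + c i := by
          rw [hct i]; ring
        rw [he1, he2]
        constructor
        · linarith [hm1 i, hcl.1]
        · linarith
  have hcanon0 : ∀ δ : ℝ, 0 < δ → δ < 1 →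
      (B' δ).card = k →
      (fun j => t j + if j ∈ B' δ then 1 else 0) ∈ divisorOutput p (H - 1) δ := by
    intro δ hδ0 hδ1 hcard
    rw [hout (H - 1) δ hδ0 hδ1]
    constructor
    · have hsum1 : ∑ j, (if j ∈ B' δ then (1:ℕ) else 0) = (B' δ).card := by
        rw [Finset.sum_ite_mem, Finset.univ_inter, Finset.card_eq_sum_ones]
      rw [Finset.sum_add_distrib, hsum1, hcard]
      omega
    · -- choose the divisor slightly below the level
      set gap : ℝ := if h : (B' δ).Nonempty then
          (B' δ).inf' h (fun j => levelFun m c k δ - (m j * δ + c j)) else 1 with hgap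
      have hgap0 : 0 < gap := by
        rw [hgap]
        split_ifs with h
        · rw [Finset.lt_inf'_iff]
          intro j hj
          have := (hB'mem δ j).mp hj
          linarith
        · exact one_pos
      have hgaple : ∀ j ∈ B' δ, gap ≤ levelFun m c k δ - (m j * δ + c j) := by
        intro j hj
        rw [hgap]
        rw [dif_pos ⟨j, hj⟩]
        exact Finset.inf'_le _ hj
      set η : ℝ := min (levelFun m c k δ / 2) (min (amin - 1) gap) with hη
      have hη0 : 0 < η := by
        rw [hη]
        have := hΛpos δ hδ0
        apply lt_min (by linarith)
        exact lt_min (by linarith) hgap0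
      have hη1 : η ≤ levelFun m c k δ / 2 := min_le_left _ _
      have hη2 : η ≤ amin - 1 := le_trans (min_le_right _ _) (min_le_left _ _)
      have hη3 : ∀ j ∈ B' δ, η ≤ levelFun m c k δ - (m j * δ + c j) :=
        fun j hj => le_trans (le_trans (min_le_right _ _) (min_le_right _ _)) (hgaple j hj)
      refine ⟨levelFun m c k δ - η, by linarith [hΛpos δ hδ0], fun i => ?_⟩
      have hcl := hclose1 δ (le_of_lt hδ0) (le_of_lt hδ1) i
      by_cases hiB : i ∈ B' δ
      · have hmem := hη3 i hiB
        simp only [hiB, if_true]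
        push_cast
        have he1 : m i * ((t i : ℝ) + 1 - 1 + δ) = m i * δ + c i := by
          rw [hct i]; ring
        have he2 : m i * ((t i : ℝ) + 1 + δ) = m i * δ + c i + m i := by
          rw [hct i]; ring
        rw [he1, he2]
        constructor
        · linarith
        · linarith [hm1 i, hcl.2, hη0]
      · have hmem : levelFun m c k δ ≤ m i * δ + c i := by
          by_contra hno
          push_neg at hno
          exact hiB ((hB'mem δ i).mpr hno)
        simp only [hiB, if_false]
        push_cast
        have he1 : m i * ((t i : ℝ) + 0 - 1 + δ) = m i * δ + c i - m i := by
          rw [hct i]; ring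
        have he2 : m i * ((t i : ℝ) + 0 + δ) = m i * δ + c i := by
          rw [hct i]; ring
        rw [he1, he2]
        constructor
        · have : amin ≤ m i := haml i
          linarith [hcl.1]
        · linarith
  -- any allocation in the output is within one seat of the integer intercepts
  have hrange : ∀ (Hs : ℕ), (Hs = H ∨ Hs + 1 = H) → ∀ δ : ℝ, 0 < δ → δ < 1 →
      ∀ x ∈ divisorOutput p Hs δ, ∀ i, x i = t i ∨ x i = t i + 1 := by
    intro Hs hHs δ hδ0 hδ1 x hx
    rw [hout Hs δ hδ0 hδ1] at hx
    obtain ⟨hsum, μ, hμ0, hcond⟩ := hx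
    have hδ0' := le_of_lt hδ0
    have hδ1' := le_of_lt hδ1
    -- upper bound
    have hup : ∀ i, x i ≤ t i + 1 := by
      by_contra hcon
      push_neg at hcon
      obtain ⟨i, hi⟩ := hcon
      have hcast : (t i : ℝ) + 2 ≤ (x i : ℝ) := by
        have : t i + 2 ≤ x i := by omega
        exact_mod_cast this
      have hcli := hclose1 δ hδ0' hδ1' i
      have hμlow : m i * δ + c i + m i ≤ μ := by
        have h1 := (hcond i).1
        have h2 : m i * ((t i : ℝ) + 1 + δ) ≤ m i * ((x i : ℝ) - 1 + δ) :=
          mul_le_mul_of_nonneg_left (by linarith) (le_of_lt (hm0 i))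
        have he : m i * ((t i : ℝ) + 1 + δ) = m i * δ + c i + m i := by
          rw [hct i]; ring
        linarith
      have hμΛ : levelFun m c k δ + (m i - 1) < μ := by linarith [hcli.1]
      -- pointwise lower bounds
      have hglex : ∀ j, t j + (if j = i then 2 else if j ∈ B δ then 1 else 0) ≤ x j := by
        intro j
        by_cases hji : j = i
        · subst hji
          simp only [if_true]
          omega
        · simp only [hji, if_false]
          have hclj := hclose1 δ hδ0' hδ1' j
          have h2 := (hcond j).2
          by_cases hjB : j ∈ B δ
          · simp only [hjB, if_true]
            have hmem := (hBmem δ j).mp hjB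
            -- μ ≤ m j * (x j + δ) and μ > ℓ j + (m i - 1)
            have hr : (t j : ℝ) < (x j : ℝ) := by
              by_contra hno
              push_neg at hno
              have h3 : m j * ((x j : ℝ) + δ) ≤ m j * ((t j : ℝ) + δ) :=
                mul_le_mul_of_nonneg_left (by linarith) (le_of_lt (hm0 j))
              have he : m j * ((t j : ℝ) + δ) = m j * δ + c j := by
                rw [hct j]; ring
              linarith [hm1 i]
            have : t j < x j := by exact_mod_cast hr
            omega
          · simp only [hjB, if_false]
            have hr : (t j : ℝ) - 1 < (x j : ℝ) := by
              by_contra hno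
              push_neg at hno
              have h3 : m j * ((x j : ℝ) + δ) ≤ m j * ((t j : ℝ) - 1 + δ) :=
                mul_le_mul_of_nonneg_left (by linarith) (le_of_lt (hm0 j))
              have he : m j * ((t j : ℝ) - 1 + δ) = m j * δ + c j - m j := by
                rw [hct j]; ring
              linarith [hm1 i, hm1 j, hclj.1]
            have : t j ≤ x j := by
              by_contra hno
              push_neg at hno
              have : (x j : ℝ) ≤ (t j : ℝ) - 1 := by
                have : x j + 1 ≤ t j := by omega
                have := (Nat.cast_le (α := ℝ)).mpr this
                push_cast at this
                linarith
              linarith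
            omega
      have hsum2 := Finset.sum_le_sum (fun j (_ : j ∈ Finset.univ) => hglex j)
      rw [hsum, Finset.sum_add_distrib] at hsum2
      have hsum3 : ∑ j, (if j = i then 2 else if j ∈ B δ then (1:ℕ) else 0) ≥ k + 2 := by
        rw [← Finset.add_sum_erase Finset.univ _ (Finset.mem_univ i)]
        simp only [if_true]
        have h4 : ∑ j ∈ Finset.univ.erase i, (if j = i then 2 else if j ∈ B δ then (1:ℕ) else 0) =
            ∑ j ∈ Finset.univ.erase i, (if j ∈ B δ then (1:ℕ) else 0) := by
          apply Finset.sum_congr rfl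
          intro j hj
          have := (Finset.mem_erase.mp hj).1
          simp [this]
        rw [h4, Finset.sum_ite_mem]
        have h5 : Finset.univ.erase i ∩ B δ = (B δ).erase i := by
          ext j
          simp [Finset.mem_erase, and_comm]
        rw [h5]
        have h6 : k ≤ ((B δ).erase i).card := by
          by_cases hiBB : i ∈ B δ
          · rw [Finset.card_erase_of_mem hiBB]
            have := hBcard_ge δ
            omega
          · rw [Finset.erase_eq_of_notMem hiBB]
            have := hBcard_ge δ
            omega
        simp only [Finset.sum_const, smul_eq_mul, mul_one]
        omega
      have hHsle : Hs ≤ H := by omega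
      rw [hHnat] at hHsle
      omega
    -- lower bound
    have hlow : ∀ i, t i ≤ x i := by
      by_contra hcon
      push_neg at hcon
      obtain ⟨i, hi⟩ := hcon
      have hti : 1 ≤ t i := by omega
      have hcast : (x i : ℝ) ≤ (t i : ℝ) - 1 := by
        have h7 : x i + 1 ≤ t i := by omega
        have := (Nat.cast_le (α := ℝ)).mpr h7
        push_cast at this
        linarith
      have hcli := hclose1 δ hδ0' hδ1' i
      have hμhigh : μ ≤ m i * δ + c i - m i := by
        have h1 := (hcond i).2
        have h2 : m i * ((x i : ℝ) + δ) ≤ m i * ((t i : ℝ) - 1 + δ) :=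
          mul_le_mul_of_nonneg_left (by linarith) (le_of_lt (hm0 i))
        have he : m i * ((t i : ℝ) - 1 + δ) = m i * δ + c i - m i := by
          rw [hct i]; ring
        linarith
      have hμΛ : μ < levelFun m c k δ + 1 - m i := by linarith [hcli.2]
      -- pointwise upper bounds away from i
      have hglex : ∀ j, j ≠ i → x j ≤ t j + (if j ∈ B' δ then 1 else 0) := by
        intro j hji
        have hclj := hclose1 δ hδ0' hδ1' j
        have h1 := (hcond j).1
        by_cases hjB : j ∈ B' δ
        · simp only [hjB, if_true]
          by_contra hno
          push_neg at hno
          have h8 : t j + 2 ≤ x j := by omega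
          have h9 : (t j : ℝ) + 2 ≤ (x j : ℝ) := by exact_mod_cast h8
          have h3 : m j * ((t j : ℝ) + 1 + δ) ≤ m j * ((x j : ℝ) - 1 + δ) :=
            mul_le_mul_of_nonneg_left (by linarith) (le_of_lt (hm0 j))
          have he : m j * ((t j : ℝ) + 1 + δ) = m j * δ + c j + m j := by
            rw [hct j]; ring
          linarith [hm1 i, hm1 j, hclj.1]
        · simp only [hjB, if_false]
          have hmem : levelFun m c k δ ≤ m j * δ + c j := by
            by_contra hno
            push_neg at hno
            exact hjB ((hB'mem δ j).mpr hno)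
          by_contra hno
          push_neg at hno
          have h8 : t j + 1 ≤ x j := by omega
          have h9 : (t j : ℝ) + 1 ≤ (x j : ℝ) := by exact_mod_cast h8
          have h3 : m j * ((t j : ℝ) + δ) ≤ m j * ((x j : ℝ) - 1 + δ) :=
            mul_le_mul_of_nonneg_left (by linarith) (le_of_lt (hm0 j))
          have he : m j * ((t j : ℝ) + δ) = m j * δ + c j := by
            rw [hct j]; ring
          linarith [hm1 i]
      -- summation
      have e1 : ∑ j, x j = x i + ∑ j ∈ Finset.univ.erase i, x j :=
        (Finset.add_sum_erase Finset.univ x (Finset.mem_univ i)).symm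
      have e2 : ∑ j ∈ Finset.univ.erase i, x j ≤
          ∑ j ∈ Finset.univ.erase i, (t j + (if j ∈ B' δ then 1 else 0)) := by
        apply Finset.sum_le_sum
        intro j hj
        exact hglex j (Finset.mem_erase.mp hj).1
      have e3 : ∑ j ∈ Finset.univ.erase i, (t j + (if j ∈ B' δ then 1 else 0)) ≤
          (∑ j ∈ Finset.univ.erase i, t j) + k := by
        rw [Finset.sum_add_distrib]
        have e3a : ∑ j ∈ Finset.univ.erase i, (if j ∈ B' δ then (1:ℕ) else 0) ≤
            ∑ j, (if j ∈ B' δ then (1:ℕ) else 0) :=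
          Finset.sum_le_sum_of_subset (Finset.subset_univ _)
        have e3b : ∑ j, (if j ∈ B' δ then (1:ℕ) else 0) = (B' δ).card := by
          rw [Finset.sum_ite_mem, Finset.univ_inter, Finset.card_eq_sum_ones]
        have := hB'card_le δ
        omega
      have e4 : ∑ j, t j = t i + ∑ j ∈ Finset.univ.erase i, t j :=
        (Finset.add_sum_erase Finset.univ t (Finset.mem_univ i)).symm
      have hHsge : H ≤ Hs + 1 := by omega
      rw [hHnat] at hHsge
      omega
    intro i
    have := hup i
    have := hlow i
    omega
  -- uniqueness of the output at generic δ
  have huniq : ∀ (Hs : ℕ), (Hs = H ∨ Hs + 1 = H) → ∀ δ : ℝ, 0 < δ → δ < 1 → δ ∉ E →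
      ∀ x ∈ divisorOutput p Hs δ, ∀ y ∈ divisorOutput p Hs δ, x = y := by
    intro Hs hHs δ hδ0 hδ1 hδE x hx y hy
    by_contra hne
    have hrx := hrange Hs hHs δ hδ0 hδ1 x hx
    have hry := hrange Hs hHs δ hδ0 hδ1 y hy
    rw [hout Hs δ hδ0 hδ1] at hx hy
    obtain ⟨hsx, μx, hμx0, hcx⟩ := hx
    obtain ⟨hsy, μy, hμy0, hcy⟩ := hy
    have hex : ∃ i, y i < x i := by
      by_contra hno
      push_neg at hno
      apply hne
      funext i
      have := (Finset.sum_eq_sum_iff_of_le (fun i (_ : i ∈ Finset.univ) => hno i)).mp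
        (by rw [hsx, hsy])
      exact this i (Finset.mem_univ i)
    have hey : ∃ j, x j < y j := by
      by_contra hno
      push_neg at hno
      apply hne
      funext i
      have := (Finset.sum_eq_sum_iff_of_le (fun i (_ : i ∈ Finset.univ) => hno i)).mp
        (by rw [hsx, hsy])
      exact (this i (Finset.mem_univ i)).symm
    obtain ⟨i, hilt⟩ := hex
    obtain ⟨j, hjlt⟩ := hey
    have hij : i ≠ j := by
      intro hcon
      subst hcon
      omega
    have hxi : x i = t i + 1 := by rcases hrx i with h | h <;> rcases hry i with h' | h' <;> omega
    have hyi : y i = t i := by rcases hrx i with h | h <;> rcases hry i with h' | h' <;> omega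
    have hxj : x j = t j := by rcases hrx j with h | h <;> rcases hry j with h' | h' <;> omega
    have hyj : y j = t j + 1 := by rcases hrx j with h | h <;> rcases hry j with h' | h' <;> omega
    have hi1 := (hcx i).1
    have hi2 := (hcy i).2
    have hj1 := (hcy j).1
    have hj2 := (hcx j).2
    rw [hxi] at hi1
    rw [hyi] at hi2
    rw [hyj] at hj1
    rw [hxj] at hj2
    push_cast at hi1 hi2 hj1 hj2
    have he1 : m i * ((t i : ℝ) + 1 - 1 + δ) = m i * δ + c i := by rw [hct i]; ring
    have he2 : m i * ((t i : ℝ) + δ) = m i * δ + c i := by rw [hct i]; ring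
    have he3 : m j * ((t j : ℝ) + 1 - 1 + δ) = m j * δ + c j := by rw [hct j]; ring
    have he4 : m j * ((t j : ℝ) + δ) = m j * δ + c j := by rw [hct j]; ring
    rw [he1] at hi1
    rw [he2] at hi2
    rw [he3] at hj1
    rw [he4] at hj2
    exact hδE ⟨i, j, hij, by linarith⟩
  -- H ≥ 1
  have hH1 : 1 ≤ H := by omega
  -- recovery of B from output equality
  have hBrec : ∀ δ1 δ2 : ℝ, δ1 ∈ Set.Ioo (0:ℝ) 1 → δ1 ∉ E → δ2 ∈ Set.Ioo (0:ℝ) 1 → δ2 ∉ E →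
      divisorOutput p H δ1 = divisorOutput p H δ2 → B δ1 = B δ2 := by
    intro δ1 δ2 h1 h1E h2 h2E heq
    have hc1 := hcanon1 δ1 h1.1 h1.2 (hgenCards δ1 h1E).1
    have hc2 := hcanon1 δ2 h2.1 h2.2 (hgenCards δ2 h2E).1
    rw [heq] at hc1
    have hfun := huniq H (Or.inl rfl) δ2 h2.1 h2.2 h2E _ hc1 _ hc2
    ext j
    have hj := congrFun hfun j
    by_cases ha : j ∈ B δ1 <;> by_cases hb : j ∈ B δ2
    · simp [ha, hb]
    · exfalso; simp only [ha, hb, if_true, if_false] at hj; omega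
    · exfalso; simp only [ha, hb, if_true, if_false] at hj; omega
    · simp [ha, hb]
  have hB'rec : ∀ δ1 δ2 : ℝ, δ1 ∈ Set.Ioo (0:ℝ) 1 → δ1 ∉ E → δ2 ∈ Set.Ioo (0:ℝ) 1 → δ2 ∉ E →
      divisorOutput p (H - 1) δ1 = divisorOutput p (H - 1) δ2 → B' δ1 = B' δ2 := by
    intro δ1 δ2 h1 h1E h2 h2E heq
    have hc1 := hcanon0 δ1 h1.1 h1.2 (hgenCards δ1 h1E).2
    have hc2 := hcanon0 δ2 h2.1 h2.2 (hgenCards δ2 h2E).2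
    rw [heq] at hc1
    have hfun := huniq (H - 1) (Or.inr (by omega)) δ2 h2.1 h2.2 h2E _ hc1 _ hc2
    ext j
    have hj := congrFun hfun j
    by_cases ha : j ∈ B' δ1 <;> by_cases hb : j ∈ B' δ2
    · simp [ha, hb]
    · exfalso; simp only [ha, hb, if_true, if_false] at hj; omega
    · exfalso; simp only [ha, hb, if_true, if_false] at hj; omega
    · simp [ha, hb]
  -- every interior vertex is a breaking point of one of the two instances
  have hvert : ∀ τ : ℝ, τ ∈ Set.Ioo (0:ℝ) 1 → IsVertex m c k τ →
      IsBreakingPoint p H τ ∨ IsBreakingPoint p (H - 1) τ := by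
    intro τ hτ hvtx
    by_contra hcon
    push_neg at hcon
    obtain ⟨hnot1, hnot2⟩ := hcon
    simp only [IsBreakingPoint, not_or] at hnot1 hnot2
    push_neg at hnot1 hnot2
    obtain ⟨ε1, hε1, hflat1⟩ := hnot1.2 hτ.1 hτ.2
    obtain ⟨ε2, hε2, hflat2⟩ := hnot2.2 hτ.1 hτ.2
    set ε0 : ℝ := min (min ε1 ε2) (min τ (1 - τ)) with hε0def
    have hε00 : 0 < ε0 :=
      lt_min (lt_min hε1 hε2) (lt_min hτ.1 (by linarith [hτ.2]))
    have hε0a : ε0 ≤ ε1 := le_trans (min_le_left _ _) (min_le_left _ _)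
    have hε0b : ε0 ≤ ε2 := le_trans (min_le_left _ _) (min_le_right _ _)
    have hε0c : ε0 ≤ τ := le_trans (min_le_right _ _) (min_le_left _ _)
    have hε0d : ε0 ≤ 1 - τ := le_trans (min_le_right _ _) (min_le_right _ _)
    have hIsub : Set.Ioo (τ - ε0) (τ + ε0) ⊆ Set.Ioo (0:ℝ) 1 := by
      intro x hx
      obtain ⟨hx1, hx2⟩ := hx
      constructor <;> [linarith; linarith]
    have hmem1 : ∀ δ : ℝ, δ ∈ Set.Ioo (τ - ε0) (τ + ε0) → δ ≠ τ →
        δ ∈ (Set.Ioo (τ - ε1) (τ + ε1) ∩ Set.Ioo (0:ℝ) 1) \ {τ} := by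
      intro δ hδ hδτ
      refine ⟨⟨⟨by linarith [hδ.1], by linarith [hδ.2]⟩, hIsub hδ⟩, hδτ⟩
    have hmem2 : ∀ δ : ℝ, δ ∈ Set.Ioo (τ - ε0) (τ + ε0) → δ ≠ τ →
        δ ∈ (Set.Ioo (τ - ε2) (τ + ε2) ∩ Set.Ioo (0:ℝ) 1) \ {τ} := by
      intro δ hδ hδτ
      refine ⟨⟨⟨by linarith [hδ.1], by linarith [hδ.2]⟩, hIsub hδ⟩, hδτ⟩
    obtain ⟨δr, hδrI0, hδrE⟩ := exists_mem_Ioo_not_mem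
      (show τ - ε0 < τ by linarith) hEfin
    have hδrI : δr ∈ Set.Ioo (τ - ε0) (τ + ε0) := ⟨hδrI0.1, by linarith [hδrI0.2]⟩
    have hδrne : δr ≠ τ := ne_of_lt hδrI0.2
    have hBconst : ∀ δ : ℝ, δ ∈ Set.Ioo (τ - ε0) (τ + ε0) → δ ≠ τ → δ ∉ E →
        B δ = B δr ∧ B' δ = B' δr := by
      intro δ hδ hδτ hδE
      constructor
      · exact hBrec δ δr (hIsub hδ) hδE (hIsub hδrI) hδrE
          (hflat1 δ δr (hmem1 δ hδ hδτ) (hmem1 δr hδrI hδrne))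
      · exact hB'rec δ δr (hIsub hδ) hδE (hIsub hδrI) hδrE
          (hflat2 δ δr (hmem2 δ hδ hδτ) (hmem2 δr hδrI hδrne))
    obtain ⟨hcB, hcB'⟩ := hgenCards δr hδrE
    have hexi : ∃ i0, i0 ∈ B δr ∧ i0 ∉ B' δr := by
      by_contra hno
      push_neg at hno
      have hsub : B δr ⊆ B' δr := fun x hx => hno x hx
      have := Finset.card_le_card hsub
      omega
    obtain ⟨i0, hi0B, hi0B'⟩ := hexi
    have hlev : ∀ δ : ℝ, δ ∈ Set.Ioo (τ - ε0) (τ + ε0) → δ ≠ τ → δ ∉ E →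
        levelFun m c k δ = m i0 * δ + c i0 := by
      intro δ hδ hδτ hδE
      obtain ⟨hBe, hB'e⟩ := hBconst δ hδ hδτ hδE
      have h1 : i0 ∈ B δ := by rw [hBe]; exact hi0B
      have h2 : i0 ∉ B' δ := by rw [hB'e]; exact hi0B'
      have h3 := (hBmem δ i0).mp h1
      have h4 : ¬(m i0 * δ + c i0 < levelFun m c k δ) :=
        fun hcc => h2 ((hB'mem δ i0).mpr hcc)
      push_neg at h4
      linarith
    have hlev2 : ∀ δ0 : ℝ, δ0 ∈ Set.Ioo (τ - ε0) (τ + ε0) →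
        levelFun m c k δ0 = m i0 * δ0 + c i0 := by
      intro δ0 hδ0
      by_contra hne0
      set d : ℝ := |levelFun m c k δ0 - (m i0 * δ0 + c i0)| with hd
      have hd0 : 0 < d := abs_pos.mpr (sub_ne_zero.mpr hne0)
      set r : ℝ := d / 8 with hr
      have hr0 : 0 < r := by positivity
      have hab : max (δ0 - r) (τ - ε0) < min (δ0 + r) (τ + ε0) := by
        apply max_lt
        · apply lt_min (by linarith) (by linarith [hδ0.2])
        · apply lt_min (by linarith [hδ0.1]) (by linarith)
      obtain ⟨x, hxI, hxE⟩ := exists_mem_Ioo_not_mem hab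
        (hEfin.union (Set.finite_singleton τ))
      have hx1 : x ∈ Set.Ioo (τ - ε0) (τ + ε0) :=
        ⟨lt_of_le_of_lt (le_max_right _ _) hxI.1,
         lt_of_lt_of_le hxI.2 (min_le_right _ _)⟩
      have hxτ : x ≠ τ := fun hcc => hxE (Set.mem_union_right _ (by rw [hcc]; rfl))
      have hxEE : x ∉ E := fun hcc => hxE (Set.mem_union_left _ hcc)
      have hzero := hlev x hx1 hxτ hxEE
      have hxd : |x - δ0| ≤ r := by
        have h5 := le_max_left (δ0 - r) (τ - ε0)
        have h6 := min_le_left (δ0 + r) (τ + ε0)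
        rw [abs_le]
        constructor <;> [linarith [hxI.1]; linarith [hxI.2]]
      have hli : |(m i0 * x + c i0) - (m i0 * δ0 + c i0)| ≤ 2 * r := by
        have he : (m i0 * x + c i0) - (m i0 * δ0 + c i0) = m i0 * (x - δ0) := by ring
        have hmm := mul_le_mul (le_of_lt (hm2 i0)) hxd (abs_nonneg _) (by norm_num : (0:ℝ) ≤ 2)
        rw [he, abs_mul, abs_of_pos (hm0 i0)]
        linarith
      have t1 := abs_sub_le (levelFun m c k δ0) (m i0 * x + c i0) (m i0 * δ0 + c i0)
      have t2 := abs_sub_le (levelFun m c k δ0) (levelFun m c k x) (m i0 * x + c i0)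
      have hz2 : |levelFun m c k x - (m i0 * x + c i0)| = 0 := by
        rw [hzero]
        simp
      have hlf : |levelFun m c k δ0 - levelFun m c k x| ≤ 2 * r := by
        have h7 : |δ0 - x| ≤ r := by rw [abs_sub_comm]; exact hxd
        have h8 := hlip δ0 x
        linarith
      linarith [hd0]
    exact hvtx ⟨m i0, c i0, ε0, hε00, fun x hx => hlev2 x hx⟩
  -- pigeonhole over the vertices
  set V : Finset ℝ := hzfin.toFinset with hV
  have hVcard : V.card = z := by
    rw [hV, ← Set.ncard_eq_toFinset_card _ hzfin]
    exact hz
  set V1 : Finset ℝ := V.filter (fun τ => IsBreakingPoint p H τ) with hV1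
  set V2 : Finset ℝ := V.filter (fun τ => IsBreakingPoint p (H - 1) τ) with hV2
  have hsubV : V ⊆ V1 ∪ V2 := by
    intro τ hτV
    have hτ : τ ∈ Set.Ioo (0:ℝ) 1 ∧ IsVertex m c k τ := by
      rw [hV, Set.Finite.mem_toFinset] at hτV
      exact hτV
    rcases hvert τ hτ.1 hτ.2 with h | h
    · exact Finset.mem_union_left _ (Finset.mem_filter.mpr ⟨hτV, h⟩)
    · exact Finset.mem_union_right _ (Finset.mem_filter.mpr ⟨hτV, h⟩)
  have hcards : z ≤ V1.card + V2.card := by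
    calc z = V.card := hVcard.symm
      _ ≤ (V1 ∪ V2).card := Finset.card_le_card hsubV
      _ ≤ V1.card + V2.card := Finset.card_union_le _ _
  by_cases hwin : (z + 1) / 2 ≤ V1.card
  · exact Or.inl ⟨V1, fun τ hτ => (Finset.mem_filter.mp hτ).2, hwin⟩
  · refine Or.inr ⟨V2, fun τ hτ => (Finset.mem_filter.mp hτ).2, ?_⟩
    omega
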